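/- There exists a complex number c such that Σ_{k=2}^{n−1} (k+1/2)^{1+iπ/2} = (n−1/2)^{2+iπ/2}/(2+iπ/2) + (1/2)(n−1/2)^{1+iπ/2} + ((1+iπ/2)/12)(n−1/2)^{iπ/2} + c + O(1/n) as n → ∞. -/

import Mathlib

open Finset Real

noncomputable def sC : ℂ := 1 + Complex.I * (π : ℂ)/2

lemma sC_ne_shift (r : ℝ) : sC - (r:ℂ) ≠ 0 := by
  intro h
  have := congrArg Complex.im h
  simp [sC] at this

lemma sC_ne : sC ≠ 0 := by simpa using sC_ne_shift 0
lemma sC1_ne : sC - 1 ≠ 0 := by simpa using sC_ne_shift 1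
lemma sC2_ne : sC - 2 ≠ 0 := by simpa using sC_ne_shift 2
lemma sC3_ne : sC - 3 ≠ 0 := by simpa using sC_ne_shift 3
lemma sCp1_ne : sC + 1 ≠ 0 := by
  have := sC_ne_shift (-1); simpa using this
lemma sC_ne_neg_one : sC ≠ -1 := by
  intro h; exact sCp1_ne (by rw [h]; ring)

lemma sC3_re : (sC - 3).re = -2 := by simp [sC]; norm_num

lemma hasDerivAt_crpow (w : ℂ) (hw : w ≠ 0) {x : ℝ} (hx : 0 < x) :
    HasDerivAt (fun t : ℝ => (t : ℂ) ^ w) (w * (x:ℂ) ^ (w - 1)) x := by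
  have hr : w - 1 ≠ -1 := by
    intro h; apply hw; linear_combination h
  have h := (hasDerivAt_ofReal_cpow_const' hx.ne' hr).const_mul w
  have heq : (fun y : ℝ => w * ((y:ℂ) ^ (w - 1 + 1) / (w - 1 + 1))) = fun y : ℝ => (y:ℂ) ^ w := by
    funext y
    rw [sub_add_cancel]
    field_simp
  rw [heq] at h
  exact h

noncomputable def GG (x : ℝ) : ℂ :=
  (x:ℂ)^(sC+1)/(sC+1) + (x:ℂ)^sC/2 + sC * (x:ℂ)^(sC-1)/12

noncomputable def KK : ℂ := sC * (sC - 1) * (sC - 2)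
noncomputable def CC : ℝ := ‖KK‖ / 2

lemma CC_nonneg : 0 ≤ CC := div_nonneg (norm_nonneg _) (by norm_num)

lemma key (x : ℝ) (hx : 1 ≤ x) :
    ‖((x+1 : ℝ) : ℂ)^sC - (GG (x+1) - GG x)‖ ≤ CC / x^2 := by
  have hx0 : (0:ℝ) < x := by linarith
  set g : ℝ → ℂ := fun t => (((t-x)^3/6 - (t-x)^2/4 + (t-x)/12 : ℝ) : ℂ) * (KK * (t:ℂ)^(sC-3)) with hg
  set ψ : ℝ → ℂ := fun t =>
      (((t-x)^3/6 - (t-x)^2/4 + (t-x)/12 : ℝ) : ℂ) * (sC*(sC-1)*(t:ℂ)^(sC-2))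
    - (((t-x)^2/2 - (t-x)/2 + 1/12 : ℝ) : ℂ) * (sC*(t:ℂ)^(sC-1))
    + (((t-x) - 1/2 : ℝ) : ℂ) * (t:ℂ)^sC - (t:ℂ)^(sC+1)/(sC+1) with hψ
  have hderiv : ∀ t ∈ Set.uIcc x (x+1), HasDerivAt ψ (g t) t := by
    intro t ht
    rw [Set.uIcc_of_le (by linarith)] at ht
    have ht0 : (0:ℝ) < t := lt_of_lt_of_le hx0 ht.1
    have hid : HasDerivAt (fun t:ℝ => t - x) 1 t := (hasDerivAt_id t).sub_const x
    have hq : HasDerivAt (fun t:ℝ => ((t-x)^3/6 - (t-x)^2/4 + (t-x)/12 : ℝ))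
        ((t-x)^2/2 - (t-x)/2 + 1/12) t := by
      have := (((hid.pow 3).div_const 6).sub ((hid.pow 2).div_const 4)).add (hid.div_const 12)
      exact this.congr_deriv (by norm_num; ring)
    have hq' : HasDerivAt (fun t:ℝ => ((t-x)^2/2 - (t-x)/2 + 1/12 : ℝ)) ((t-x) - 1/2) t := by
      have := (((hid.pow 2).div_const 2).sub (hid.div_const 2)).add_const (1/12)
      exact this.congr_deriv (by norm_num)
    have hq'' : HasDerivAt (fun t:ℝ => ((t-x) - 1/2 : ℝ)) 1 t := hid.sub_const (1/2)
    have h1 := hq.ofReal_comp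
    have h2 := hq'.ofReal_comp
    have h3 := hq''.ofReal_comp
    have hc2 : HasDerivAt (fun t:ℝ => (t:ℂ)^(sC-2)) ((sC-2) * (t:ℂ)^(sC-3)) t := by
      have := hasDerivAt_crpow (sC-2) sC2_ne ht0
      rwa [show sC - 2 - 1 = sC - 3 by ring] at this
    have hc1 : HasDerivAt (fun t:ℝ => (t:ℂ)^(sC-1)) ((sC-1) * (t:ℂ)^(sC-2)) t := by
      have := hasDerivAt_crpow (sC-1) sC1_ne ht0
      rwa [show sC - 1 - 1 = sC - 2 by ring] at this
    have hc0 : HasDerivAt (fun t:ℝ => (t:ℂ)^sC) (sC * (t:ℂ)^(sC-1)) t :=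
      hasDerivAt_crpow sC sC_ne ht0
    have hP : HasDerivAt (fun y:ℝ => (y:ℂ)^(sC+1)/(sC+1)) ((t:ℂ)^sC) t :=
      hasDerivAt_ofReal_cpow_const' ht0.ne' sC_ne_neg_one
    have total := (((h1.mul (hc2.const_mul (sC*(sC-1)))).sub
        (h2.mul (hc1.const_mul sC))).add (h3.mul hc0)).sub hP
    refine total.congr_deriv ?_
    simp only [hg]
    push_cast [KK]
    ring
  have hcont : IntervalIntegrable g MeasureTheory.volume x (x+1) := by
    apply ContinuousOn.intervalIntegrable
    intro t ht
    rw [Set.uIcc_of_le (by linarith)] at ht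
    have ht0 : (0:ℝ) < t := lt_of_lt_of_le hx0 ht.1
    apply ContinuousAt.continuousWithinAt
    exact ((Complex.continuous_ofReal.comp (by continuity)).continuousAt).mul
      (continuousAt_const.mul (hasDerivAt_crpow (sC-3) sC3_ne ht0).continuousAt)
  have hftc := intervalIntegral.integral_eq_sub_of_hasDerivAt hderiv hcont
  have hD : ((x+1:ℝ):ℂ)^sC - (GG (x+1) - GG x) = ∫ t in x..(x+1), g t := by
    rw [hftc]
    simp only [hψ, GG]
    push_cast
    ring
  rw [hD]
  have hb : ∀ t ∈ Set.uIoc x (x+1), ‖g t‖ ≤ CC / x^2 := by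
    intro t ht
    rw [Set.uIoc_of_le (by linarith)] at ht
    have ht0 : (0:ℝ) < t := lt_trans hx0 ht.1
    have hrn : ‖(t:ℂ)^(sC-3)‖ = (t^2)⁻¹ := by
      rw [Complex.norm_cpow_eq_rpow_re_of_pos ht0, sC3_re,
        Real.rpow_neg ht0.le, show (2:ℝ) = ((2:ℕ):ℝ) by norm_num, Real.rpow_natCast]
    have hgn : ‖g t‖ = |(t-x)^3/6 - (t-x)^2/4 + (t-x)/12| * (‖KK‖ * (t^2)⁻¹) := by
      simp only [hg]
      rw [norm_mul, norm_mul, hrn, Complex.norm_real, Real.norm_eq_abs]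
    rw [hgn]
    have hinv : (t^2)⁻¹ ≤ (x^2)⁻¹ := by
      have : x^2 ≤ t^2 := by nlinarith [ht.1]
      gcongr
    have hu0 : 0 ≤ t - x := by linarith [ht.1]
    have hu1 : t - x ≤ 1 := by linarith [ht.2]
    set u := t - x
    clear_value u
    have habs : |u^3/6 - u^2/4 + u/12| ≤ 1/2 := by
      have h2 : u^2 ≤ 1 := by nlinarith
      rw [abs_le]
      constructor <;> nlinarith [pow_nonneg hu0 3, sq_nonneg u]
    calc |u^3/6 - u^2/4 + u/12| * (‖KK‖ * (t^2)⁻¹)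
        ≤ (1/2) * (‖KK‖ * (x^2)⁻¹) := by gcongr
      _ = CC / x^2 := by rw [CC]; field_simp
  calc ‖∫ t in x..(x+1), g t‖ ≤ CC / x^2 * |x + 1 - x| :=
        intervalIntegral.norm_integral_le_of_norm_le_const hb
    _ = CC / x^2 := by rw [show x + 1 - x = 1 by ring, abs_one, mul_one]


noncomputable def aa (n : ℕ) : ℂ :=
  (∑ k ∈ Finset.Icc 2 (n - 1), ((k : ℂ) + 1/2) ^ (1 + Complex.I * (π : ℂ)/2)) - GG ((n:ℝ) - 1/2)

lemma step (n : ℕ) (hn : 2 ≤ n) :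
    ‖aa (n+1) - aa n‖ ≤ 8 * CC * (1/(n:ℝ) - 1/((n:ℝ)+1)) := by
  obtain ⟨m, rfl⟩ : ∃ m, n = m + 2 := ⟨n - 2, by omega⟩
  set x : ℝ := ((m:ℝ) + 2) - 1/2 with hx
  have h1 : 1 ≤ x := by
    rw [hx]; have : (0:ℝ) ≤ (m:ℝ) := Nat.cast_nonneg m; linarith
  have hstep : aa (m+2+1) - aa (m+2) = ((x+1:ℝ):ℂ)^sC - (GG (x+1) - GG x) := by
    simp only [aa]
    rw [show (m+2+1) - 1 = (m+1) + 1 by omega, show (m+2) - 1 = m+1 by omega]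
    rw [Finset.sum_Icc_succ_top (by omega : 2 ≤ m+1+1)]
    have e1 : (((m+1+1 : ℕ)):ℂ) + 1/2 = ((x+1:ℝ):ℂ) := by push_cast [hx]; ring
    have e2 : ((m+2+1:ℕ):ℝ) - 1/2 = x + 1 := by push_cast [hx]; ring
    have e3 : ((m+2:ℕ):ℝ) - 1/2 = x := by push_cast [hx]; ring
    have e4 : (1 : ℂ) + Complex.I * (π:ℂ)/2 = sC := rfl
    rw [e1, e2, e3, e4]
    ring
  rw [hstep]
  have hkey := key x h1
  have hx2 : (0:ℝ) < x^2 := by positivity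
  have hn2 : (2:ℝ) ≤ ((m+2:ℕ):ℝ) := by push_cast; linarith [Nat.cast_nonneg (α := ℝ) m]
  have hprod : (0:ℝ) < ((m+2:ℕ):ℝ) * (((m+2:ℕ):ℝ)+1) := by positivity
  calc ‖((x+1:ℝ):ℂ)^sC - (GG (x+1) - GG x)‖ ≤ CC / x^2 := hkey
    _ ≤ 8*CC/(((m+2:ℕ):ℝ) * (((m+2:ℕ):ℝ)+1)) := by
        rw [div_le_div_iff₀ hx2 hprod]
        have hxn : x = ((m+2:ℕ):ℝ) - 1/2 := by push_cast [hx]; ring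
        rw [hxn]
        nlinarith [mul_nonneg CC_nonneg
          (show (0:ℝ) ≤ 7*((m+2:ℕ):ℝ)^2 - 9*((m+2:ℕ):ℝ) + 2 by nlinarith)]
    _ = 8 * CC * (1/((m+2:ℕ):ℝ) - 1/(((m+2:ℕ):ℝ)+1)) := by
        field_simp
        ring

lemma tele (n : ℕ) (hn : 2 ≤ n) : ∀ m, n ≤ m → ‖aa m - aa n‖ ≤ 8*CC*(1/(n:ℝ) - 1/(m:ℝ)) := by
  intro m hm
  induction m, hm using Nat.le_induction with
  | base => simp
  | succ m hm ih =>
    push_cast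
    have h1 := step m (le_trans hn hm)
    calc ‖aa (m+1) - aa n‖ ≤ ‖aa (m+1) - aa m‖ + ‖aa m - aa n‖ := by
          have : aa (m+1) - aa n = (aa (m+1) - aa m) + (aa m - aa n) := by ring
          rw [this]; exact norm_add_le _ _
      _ ≤ 8*CC*(1/(m:ℝ) - 1/((m:ℝ)+1)) + 8*CC*(1/(n:ℝ) - 1/(m:ℝ)) := add_le_add h1 ih
      _ = 8*CC*(1/(n:ℝ) - 1/((m:ℝ)+1)) := by ring

lemma cauchy_aa : CauchySeq (fun n => aa (n+2)) := by
  refine cauchySeq_of_le_tendsto_0' (fun N => 8*CC/((N:ℝ)+2)) ?_ ?_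
  · intro n m hnm
    rw [dist_eq_norm, show aa (n+2) - aa (m+2) = -(aa (m+2) - aa (n+2)) by ring, norm_neg]
    have h := tele (n+2) (by omega) (m+2) (by omega)
    calc ‖aa (m+2) - aa (n+2)‖ ≤ 8*CC*(1/((n+2:ℕ):ℝ) - 1/((m+2:ℕ):ℝ)) := h
      _ ≤ 8*CC/((n:ℝ)+2) := by
          push_cast
          have h1 : (0:ℝ) ≤ 1/((m:ℝ)+2) := by positivity
          have h2 : (0:ℝ) ≤ 8*CC := by linarith [CC_nonneg]
          have h3 := mul_le_mul_of_nonneg_left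
            (show 1/((n:ℝ)+2) - 1/((m:ℝ)+2) ≤ 1/((n:ℝ)+2) by linarith) h2
          calc 8*CC*(1/((n:ℝ)+2) - 1/((m:ℝ)+2)) ≤ 8*CC*(1/((n:ℝ)+2)) := h3
            _ = 8*CC/((n:ℝ)+2) := by ring
  · have h := (tendsto_const_div_atTop_nhds_zero_nat (8*CC)).comp
      (Filter.tendsto_add_atTop_nat 2)
    convert h using 2 with N
    simp [Function.comp]

lemma aa_dist (c : ℂ) (hc : Filter.Tendsto aa Filter.atTop (nhds c)) :
    ∀ n : ℕ, 2 ≤ n → ‖aa n - c‖ ≤ 8*CC/(n:ℝ) := by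
  intro n hn
  have hten : Filter.Tendsto (fun m => ‖aa m - aa n‖) Filter.atTop (nhds ‖c - aa n‖) :=
    (hc.sub_const (aa n)).norm
  rw [show ‖aa n - c‖ = ‖c - aa n‖ from norm_sub_rev _ _]
  apply le_of_tendsto hten
  filter_upwards [Filter.eventually_ge_atTop n] with m hm
  calc ‖aa m - aa n‖ ≤ 8*CC*(1/(n:ℝ) - 1/(m:ℝ)) := tele n hn m hm
    _ ≤ 8*CC/(n:ℝ) := by
        have h1 : (0:ℝ) ≤ 1/(m:ℝ) := by positivity
        have h2 : (0:ℝ) ≤ 8*CC := by linarith [CC_nonneg]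
        have h3 := mul_le_mul_of_nonneg_left
          (show 1/(n:ℝ) - 1/(m:ℝ) ≤ 1/(n:ℝ) by linarith) h2
        calc 8*CC*(1/(n:ℝ) - 1/(m:ℝ)) ≤ 8*CC*(1/(n:ℝ)) := h3
          _ = 8*CC/(n:ℝ) := by ring

theorem sum_S1_asymptotics :
    ∃ c : ℂ, ∃ A > (0 : ℝ), ∃ N : ℕ, ∀ n : ℕ, n ≥ N →
      ‖(∑ k ∈ Finset.Icc 2 (n - 1), ((k : ℂ) + 1/2) ^ (1 + Complex.I * (π : ℂ)/2))
        - (((n : ℂ) - 1/2) ^ (2 + Complex.I * (π : ℂ)/2) / (2 + Complex.I * (π : ℂ)/2)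
           + (1/2) * ((n : ℂ) - 1/2) ^ (1 + Complex.I * (π : ℂ)/2)
           + ((1 + Complex.I * (π : ℂ)/2) / 12) * ((n : ℂ) - 1/2) ^ (Complex.I * (π : ℂ)/2)
           + c)‖ ≤ A / (n : ℝ) := by
  obtain ⟨c, hc⟩ := cauchySeq_tendsto_of_complete cauchy_aa
  have ha : Filter.Tendsto aa Filter.atTop (nhds c) :=
    (Filter.tendsto_add_atTop_iff_nat 2).mp hc
  refine ⟨c, 8*CC+1, by linarith [CC_nonneg], 2, ?_⟩
  intro n hn
  have h := aa_dist c ha n hn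
  have hb : ((n:ℂ) - 1/2) = (((n:ℝ) - 1/2 : ℝ) : ℂ) := by push_cast; ring
  have he1 : (2:ℂ) + Complex.I * (π:ℂ)/2 = sC + 1 := by simp only [sC]; ring
  have he2 : Complex.I * (π:ℂ)/2 = sC - 1 := by simp only [sC]; ring
  have he3 : (1:ℂ) + Complex.I * (π:ℂ)/2 = sC := rfl
  have heq : (∑ k ∈ Finset.Icc 2 (n - 1), ((k : ℂ) + 1/2) ^ (1 + Complex.I * (π : ℂ)/2))
        - (((n : ℂ) - 1/2) ^ (2 + Complex.I * (π : ℂ)/2) / (2 + Complex.I * (π : ℂ)/2)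
           + (1/2) * ((n : ℂ) - 1/2) ^ (1 + Complex.I * (π : ℂ)/2)
           + ((1 + Complex.I * (π : ℂ)/2) / 12) * ((n : ℂ) - 1/2) ^ (Complex.I * (π : ℂ)/2)
           + c) = aa n - c := by
    simp only [aa, GG]
    rw [hb, he3, he1, he2]
    ring
  rw [heq]
  have hn0 : (0:ℝ) < (n:ℝ) := by
    have : (0:ℕ) < n := by omega
    exact_mod_cast this
  calc ‖aa n - c‖ ≤ 8*CC/(n:ℝ) := h
    _ ≤ (8*CC+1)/(n:ℝ) := by
        gcongr
        linarith
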